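/- Let Y be an unbounded subset of the real line ℝ, regarded as a metric subspace with the usual metric |x−y|. Then the following conditions are equivalent: (1) Y is isometric to ℝ or to ℝ₊ = [0,∞); (2) for every scaling sequence r̃ and every maximal self-stable subset F of Seq(Y,r̃), there exists a surjective mapping Φ : F → Y such that |Φ(x̃) − Φ(ỹ)| = d_r̃(x̃,ỹ) for all x̃, ỹ ∈ F (equivalently, the metric identification of the pseudometric space (F, d_r̃) is isometric to Y). -/

import Mathlib

open Filter Topology

/-- `Seq(Y, r̃)` for a subset `Y` of the real line: the set of sequences of points
of `Y` for which the finite limit `lim |x n| / r n = lim dist (x n) 0 / r n` exists. -/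
def SeqY (Y : Set ℝ) (r : ℕ → ℝ) : Set (ℕ → ℝ) :=
  {x | (∀ n, x n ∈ Y) ∧ ∃ l : ℝ, Tendsto (fun n => |x n| / r n) atTop (𝓝 l)}

/-- Two sequences of reals are mutually stable with respect to `r` if the finite
limit `lim |x n - y n| / r n` exists. -/
def MutStableR (r : ℕ → ℝ) (x y : ℕ → ℝ) : Prop :=
  ∃ l : ℝ, Tendsto (fun n => |x n - y n| / r n) atTop (𝓝 l)

/-- A self-stable subset of `Seq(Y, r̃)`. -/
def SelfStableY (Y : Set ℝ) (r : ℕ → ℝ) (F : Set (ℕ → ℝ)) : Prop :=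
  F ⊆ SeqY Y r ∧ ∀ x ∈ F, ∀ y ∈ F, MutStableR r x y

/-- A maximal self-stable subset of `Seq(Y, r̃)`. -/
def MaxSelfStableY (Y : Set ℝ) (r : ℕ → ℝ) (F : Set (ℕ → ℝ)) : Prop :=
  SelfStableY Y r F ∧ ∀ G, SelfStableY Y r G → F ⊆ G → F = G

namespace PretangentAux
noncomputable section

/-- the set of limits `lim εₙ xₙ / rₙ` over sequences in `S` -/
def AAset (S : Set ℝ) (r ε : ℕ → ℝ) : Set ℝ :=
  {t | ∃ x : ℕ → ℝ, (∀ n, x n ∈ S) ∧ Tendsto (fun n => ε n * x n / r n) atTop (𝓝 t)}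

/-- canonical maximal self-stable set: sequences with a signed limit -/
def Fset (S : Set ℝ) (r ε : ℕ → ℝ) : Set (ℕ → ℝ) :=
  {x | (∀ n, x n ∈ S) ∧ ∃ t, Tendsto (fun n => ε n * x n / r n) atTop (𝓝 t)}

def IsSgn (ε : ℕ → ℝ) : Prop := ∀ n, ε n = 1 ∨ ε n = -1

lemma IsSgn.sq {ε} (hε : IsSgn ε) (n : ℕ) : ε n * ε n = 1 := by
  rcases hε n with h | h <;> rw [h] <;> norm_num

lemma IsSgn.abs1 {ε} (hε : IsSgn ε) (n : ℕ) : |ε n| = 1 := by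
  rcases hε n with h | h <;> rw [h] <;> norm_num

lemma abs_div_eq {ε r : ℕ → ℝ} (hε : IsSgn ε) (hr : ∀ n, 0 < r n) (x : ℕ → ℝ) (n : ℕ) :
    |x n| / r n = |ε n * x n / r n| := by
  rw [abs_div, abs_mul, hε.abs1, one_mul, abs_of_pos (hr n)]

lemma abs_sub_div_eq {ε r : ℕ → ℝ} (hε : IsSgn ε) (hr : ∀ n, 0 < r n) (x y : ℕ → ℝ) (n : ℕ) :
    |x n - y n| / r n = |ε n * x n / r n - ε n * y n / r n| := by
  have h : ε n * x n / r n - ε n * y n / r n = ε n * (x n - y n) / r n := by ring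
  rw [h, abs_div, abs_mul, hε.abs1, one_mul, abs_of_pos (hr n)]

lemma tendsto_const_div {r : ℕ → ℝ} (hr' : Tendsto r atTop atTop) (c : ℝ) :
    Tendsto (fun n => c / r n) atTop (𝓝 0) :=
  Tendsto.div_atTop tendsto_const_nhds hr'

lemma Fset_selfStable {Y : Set ℝ} {r ε : ℕ → ℝ} (hε : IsSgn ε) (hr : ∀ n, 0 < r n) :
    SelfStableY Y r (Fset Y r ε) := by
  constructor
  · rintro x ⟨hxY, t, ht⟩
    exact ⟨hxY, |t|, ht.abs.congr (fun n => (abs_div_eq hε hr x n).symm)⟩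
  · rintro x ⟨hxY, t, ht⟩ y ⟨hyY, s, hs⟩
    exact ⟨|t - s|, ((ht.sub hs).abs).congr (fun n => (abs_sub_div_eq hε hr x y n).symm)⟩

/-- the key convergence formula: a sequence mutually stable with an anchor of positive
    signed limit has itself a signed limit -/
lemma limb {r ε x₀ z : ℕ → ℝ} (hε : IsSgn ε) (hr : ∀ n, 0 < r n) {p₀ l m : ℝ}
    (hp₀ : 0 < p₀)
    (hx₀ : Tendsto (fun n => ε n * x₀ n / r n) atTop (𝓝 p₀))
    (hl : Tendsto (fun n => |z n| / r n) atTop (𝓝 l))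
    (hm : Tendsto (fun n => |x₀ n - z n| / r n) atTop (𝓝 m)) :
    ∃ t, Tendsto (fun n => ε n * z n / r n) atTop (𝓝 t) := by
  set a : ℕ → ℝ := fun n => ε n * x₀ n / r n with ha
  set b : ℕ → ℝ := fun n => ε n * z n / r n with hb
  have h1 : ∀ n, (|z n| / r n) ^ 2 = b n ^ 2 := by
    intro n
    have : b n ^ 2 = (ε n * ε n) * (z n / r n) ^ 2 := by simp only [hb]; ring
    rw [this, hε.sq, one_mul, div_pow, div_pow, sq_abs]
  have h2 : ∀ n, (|x₀ n - z n| / r n) ^ 2 = (a n - b n) ^ 2 := by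
    intro n
    have : (a n - b n) ^ 2 = (ε n * ε n) * ((x₀ n - z n) / r n) ^ 2 := by
      simp only [ha, hb]; ring
    rw [this, hε.sq, one_mul, div_pow, div_pow, sq_abs]
  refine ⟨(p₀ ^ 2 + l ^ 2 - m ^ 2) / (2 * p₀), ?_⟩
  have htt : Tendsto (fun n => (a n ^ 2 + (|z n| / r n) ^ 2 - (|x₀ n - z n| / r n) ^ 2) /
      (2 * a n)) atTop (𝓝 ((p₀ ^ 2 + l ^ 2 - m ^ 2) / (2 * p₀))) := by
    exact Tendsto.div (((hx₀.pow 2).add (hl.pow 2)).sub (hm.pow 2)) (hx₀.const_mul 2)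
      (by positivity)
  have hev : ∀ᶠ n in atTop, a n ≠ 0 := hx₀.eventually_ne hp₀.ne'
  refine htt.congr' ?_
  filter_upwards [hev] with n hn
  rw [h1 n, h2 n]
  field_simp
  ring

lemma Fset_max {Y : Set ℝ} {r ε x₀ : ℕ → ℝ} (hε : IsSgn ε) (hr : ∀ n, 0 < r n)
    (hx₀Y : ∀ n, x₀ n ∈ Y) {p₀ : ℝ} (hp₀ : 0 < p₀)
    (hx₀ : Tendsto (fun n => ε n * x₀ n / r n) atTop (𝓝 p₀)) :
    MaxSelfStableY Y r (Fset Y r ε) := by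
  refine ⟨Fset_selfStable hε hr, ?_⟩
  intro G hG hFG
  refine Set.Subset.antisymm hFG ?_
  intro z hz
  have hx₀F : x₀ ∈ Fset Y r ε := ⟨hx₀Y, p₀, hx₀⟩
  obtain ⟨hzY, l, hl⟩ := hG.1 hz
  obtain ⟨m, hm⟩ := hG.2 x₀ (hFG hx₀F) z hz
  exact ⟨hzY, limb hε hr hp₀ hx₀ hl hm⟩

/-- rigidity of distance-preserving maps between subsets of ℝ -/
lemma rigid {S : Set ℝ} {χ : ℝ → ℝ} (h : ∀ v ∈ S, ∀ w ∈ S, |χ v - χ w| = |v - w|)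
    {y₁ y₂ : ℝ} (h₁ : y₁ ∈ S) (h₂ : y₂ ∈ S) (hne : y₂ ≠ y₁) :
    ∃ σ c : ℝ, (σ = 1 ∨ σ = -1) ∧ ∀ v ∈ S, χ v = σ * v + c := by
  have hkey : ∀ v ∈ S, ∀ w ∈ S, χ v - χ w = v - w ∨ χ v - χ w = -(v - w) := by
    intro v hv w hw
    exact abs_eq_abs.mp (h v hv w hw)
  have hy : χ y₂ - χ y₁ = y₂ - y₁ ∨ χ y₂ - χ y₁ = -(y₂ - y₁) := hkey y₂ h₂ y₁ h₁
  have hne' : y₂ - y₁ ≠ 0 := sub_ne_zero.mpr hne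
  rcases hy with hy | hy
  · refine ⟨1, χ y₁ - y₁, Or.inl rfl, ?_⟩
    intro v hv
    rcases hkey v hv y₁ h₁ with h' | h'
    · linarith
    · -- mismatch: compare with y₂
      rcases hkey v hv y₂ h₂ with h'' | h''
      · have : v = y₁ := by linarith
        rw [this]; linarith
      · exfalso; apply hne'; linarith
  · refine ⟨-1, χ y₁ + y₁, Or.inr rfl, ?_⟩
    intro v hv
    rcases hkey v hv y₁ h₁ with h' | h'
    · rcases hkey v hv y₂ h₂ with h'' | h''
      · exfalso; apply hne'; linarith
      · have : v = y₁ := by linarith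
        rw [this]; linarith
    · linarith

/-- construction of the surjection Φ on the canonical maximal self-stable set -/
lemma phi {Y : Set ℝ} {r ε : ℕ → ℝ} (hε : IsSgn ε) (hr : ∀ n, 0 < r n)
    (ι : ℝ → ℝ) (hι : ∀ t u, |ι t - ι u| = |t - u|)
    (hmem : ∀ t ∈ AAset Y r ε, ι t ∈ Y)
    (hsur : ∀ y ∈ Y, ∃ t ∈ AAset Y r ε, ι t = y) :
    ∃ Φ : (Fset Y r ε) → ↥Y, Function.Surjective Φ ∧
      ∀ x y : (Fset Y r ε),
        Tendsto (fun n => |(x : ℕ → ℝ) n - (y : ℕ → ℝ) n| / r n) atTop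
          (𝓝 (dist (Φ x) (Φ y))) := by
  classical
  have hmemF : ∀ x : (Fset Y r ε), ∃ t, Tendsto (fun n => ε n * (x : ℕ → ℝ) n / r n) atTop (𝓝 t) :=
    fun x => x.2.2
  set ψ : (Fset Y r ε) → ℝ := fun x => Classical.choose (hmemF x) with hψdef
  have hψ : ∀ x : (Fset Y r ε), Tendsto (fun n => ε n * (x : ℕ → ℝ) n / r n) atTop (𝓝 (ψ x)) :=
    fun x => Classical.choose_spec (hmemF x)
  have hψAA : ∀ x : (Fset Y r ε), ψ x ∈ AAset Y r ε := fun x => ⟨x.1, x.2.1, hψ x⟩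
  refine ⟨fun x => ⟨ι (ψ x), hmem _ (hψAA x)⟩, ?_, ?_⟩
  · rintro ⟨y, hy⟩
    obtain ⟨t, ⟨x, hxY, hxt⟩, hιt⟩ := hsur y hy
    refine ⟨⟨x, hxY, t, hxt⟩, ?_⟩
    have : ψ ⟨x, hxY, t, hxt⟩ = t := tendsto_nhds_unique (hψ _) hxt
    apply Subtype.ext
    show ι (ψ ⟨x, hxY, t, hxt⟩) = y
    rw [this, hιt]
  · intro x y
    have hd : dist (⟨ι (ψ x), hmem _ (hψAA x)⟩ : ↥Y) ⟨ι (ψ y), hmem _ (hψAA y)⟩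
        = |ψ x - ψ y| := by
      rw [Subtype.dist_eq, Real.dist_eq, hι]
    rw [hd]
    exact (((hψ x).sub (hψ y)).abs).congr
      (fun n => (abs_sub_div_eq hε hr (x : ℕ → ℝ) (y : ℕ → ℝ) n).symm)

lemma tendsto_div_of_lb {r z : ℕ → ℝ} (hr : ∀ n, 0 < r n) (hr' : Tendsto r atTop atTop)
    {b l : ℝ} (hz : ∀ n, b ≤ z n)
    (hl : Tendsto (fun n => |z n| / r n) atTop (𝓝 l)) :
    Tendsto (fun n => z n / r n) atTop (𝓝 l) := by
  have h0 : Tendsto (fun n => (|z n| - z n) / r n) atTop (𝓝 0) := by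
    have hub : Tendsto (fun n => (2 * |b|) / r n) atTop (𝓝 0) :=
      Tendsto.div_atTop tendsto_const_nhds hr'
    refine tendsto_of_tendsto_of_tendsto_of_le_of_le tendsto_const_nhds hub ?_ ?_
    · intro n
      have h1 : 0 ≤ |z n| - z n := by
        rcases abs_cases (z n) with ⟨h, _⟩ | ⟨h, _⟩ <;> linarith
      exact div_nonneg h1 (hr n).le
    · intro n
      have h1 : |z n| - z n ≤ 2 * |b| := by
        rcases abs_cases (z n) with ⟨h, _⟩ | ⟨h, _⟩
        · have := abs_nonneg b; linarith
        · have h2 := hz n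
          have h3 : -b ≤ |b| := neg_le_abs b
          linarith
      exact (div_le_div_iff_of_pos_right (hr n)).mpr h1
  have h2 := hl.sub h0
  rw [sub_zero] at h2
  refine h2.congr (fun n => ?_)
  rw [div_sub_div_same, sub_sub_cancel]

lemma Fset_eq_of_anchor {Y : Set ℝ} {r ε x₀ : ℕ → ℝ} {F : Set (ℕ → ℝ)}
    (hε : IsSgn ε) (hr : ∀ n, 0 < r n) (hF : MaxSelfStableY Y r F) (hx₀F : x₀ ∈ F)
    {p₀ : ℝ} (hp₀ : 0 < p₀)
    (hx₀ : Tendsto (fun n => ε n * x₀ n / r n) atTop (𝓝 p₀)) :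
    F = Fset Y r ε := by
  apply hF.2 _ (Fset_selfStable hε hr)
  intro z hz
  obtain ⟨hzY, l, hl⟩ := hF.1.1 hz
  obtain ⟨m, hm⟩ := hF.1.2 x₀ hx₀F z hz
  exact ⟨hzY, limb hε hr hp₀ hx₀ hl hm⟩

lemma main_of_phi {Y : Set ℝ} {r ε : ℕ → ℝ} {F : Set (ℕ → ℝ)}
    (hε : IsSgn ε) (hr : ∀ n, 0 < r n) (hFeq : F = Fset Y r ε)
    (ι : ℝ → ℝ) (hι : ∀ t u, |ι t - ι u| = |t - u|)
    (hmem : ∀ t ∈ AAset Y r ε, ι t ∈ Y)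
    (hsur : ∀ y ∈ Y, ∃ t ∈ AAset Y r ε, ι t = y) :
    ∃ Φ : F → ↥Y, Function.Surjective Φ ∧
      ∀ x y : F,
        Tendsto (fun n => |(x : ℕ → ℝ) n - (y : ℕ → ℝ) n| / r n) atTop
          (𝓝 (dist (Φ x) (Φ y))) := by
  subst hFeq
  exact phi hε hr ι hι hmem hsur

lemma forward_univ {r : ℕ → ℝ} (hr : ∀ n, 0 < r n) (hr' : Tendsto r atTop atTop)
    (F : Set (ℕ → ℝ)) (hF : MaxSelfStableY Set.univ r F) :
    ∃ Φ : F → ↥(Set.univ : Set ℝ), Function.Surjective Φ ∧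
      ∀ x y : F,
        Tendsto (fun n => |(x : ℕ → ℝ) n - (y : ℕ → ℝ) n| / r n) atTop
          (𝓝 (dist (Φ x) (Φ y))) := by
  -- step 1: find an anchor
  obtain ⟨x₀, hx₀F, ε, hε, p₀, hp₀, hx₀⟩ :
      ∃ x₀ ∈ F, ∃ ε, IsSgn ε ∧ ∃ p₀, 0 < p₀ ∧
        Tendsto (fun n => ε n * x₀ n / r n) atTop (𝓝 p₀) := by
    by_cases hex : ∃ x₀ ∈ F, ∃ p, 0 < p ∧ Tendsto (fun n => |x₀ n| / r n) atTop (𝓝 p)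
    · obtain ⟨x₀, hm, p, hp, hlim⟩ := hex
      refine ⟨x₀, hm, fun n => if x₀ n < 0 then -1 else 1, fun n => ?_, p, hp, ?_⟩
      · by_cases h : x₀ n < 0 <;> simp [h]
      · refine hlim.congr (fun n => ?_)
        by_cases h : x₀ n < 0
        · simp only [if_pos h]
          rw [abs_of_neg h]; ring
        · simp only [if_neg h]
          rw [abs_of_nonneg (not_lt.mp h)]; ring
    · push_neg at hex
      have hzero : ∀ x ∈ F, Tendsto (fun n => |x n| / r n) atTop (𝓝 0) := by
        intro x hx
        obtain ⟨_, l, hl⟩ := hF.1.1 hx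
        have hl0 : 0 ≤ l := ge_of_tendsto' hl (fun n => div_nonneg (abs_nonneg _) (hr n).le)
        rcases eq_or_lt_of_le hl0 with h | h
        · rwa [← h] at hl
        · exact absurd hl (hex x hx l h)
      have hone : ∀ x ∈ F, Tendsto (fun n => |x n - r n| / r n) atTop (𝓝 1) := by
        intro x hx
        have hg : Tendsto (fun n => 1 - |x n| / r n) atTop (𝓝 1) := by
          simpa using tendsto_const_nhds.sub (hzero x hx)
        have hh : Tendsto (fun n => 1 + |x n| / r n) atTop (𝓝 1) := by
          simpa using tendsto_const_nhds.add (hzero x hx)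
        refine tendsto_of_tendsto_of_tendsto_of_le_of_le hg hh ?_ ?_
        · intro n
          have h1 : r n - |x n| ≤ |x n - r n| := by
            calc r n - |x n| = |r n| - |x n| := by rw [abs_of_pos (hr n)]
            _ ≤ |r n - x n| := abs_sub_abs_le_abs_sub _ _
            _ = |x n - r n| := abs_sub_comm _ _
          have h2 : (r n - |x n|) / r n = 1 - |x n| / r n := by
            rw [sub_div, div_self (hr n).ne']
          show 1 - |x n| / r n ≤ |x n - r n| / r n
          rw [← h2]
          exact (div_le_div_iff_of_pos_right (hr n)).mpr h1
        · intro n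
          have h1 : |x n - r n| ≤ |x n| + r n := by
            calc |x n - r n| ≤ |x n| + |r n| := abs_sub _ _
            _ = |x n| + r n := by rw [abs_of_pos (hr n)]
          have h2 : (|x n| + r n) / r n = 1 + |x n| / r n := by
            rw [add_div, div_self (hr n).ne', add_comm]
          show |x n - r n| / r n ≤ 1 + |x n| / r n
          rw [← h2]
          exact (div_le_div_iff_of_pos_right (hr n)).mpr h1
      have hrF : (fun n => r n) ∈ F := by
        have habs : ∀ n, |r n| / r n = 1 := fun n => by
          rw [abs_of_pos (hr n), div_self (hr n).ne']
        have hG : SelfStableY Set.univ r (insert (fun n => r n) F) := by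
          constructor
          · intro x hx
            rcases Set.mem_insert_iff.mp hx with rfl | hx
            · exact ⟨fun n => trivial, 1, tendsto_const_nhds.congr fun n => (habs n).symm⟩
            · exact hF.1.1 hx
          · intro x hx y hy
            rcases Set.mem_insert_iff.mp hx with rfl | hx <;>
              rcases Set.mem_insert_iff.mp hy with rfl | hy
            · exact ⟨0, tendsto_const_nhds.congr fun n => by simp⟩
            · exact ⟨1, (hone y hy).congr (fun n => by rw [abs_sub_comm])⟩
            · exact ⟨1, hone x hx⟩
            · exact hF.1.2 x hx y hy
        have := hF.2 _ hG (Set.subset_insert _ _)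
        rw [this]
        exact Set.mem_insert _ _
      refine ⟨fun n => r n, hrF, fun _ => 1, fun n => Or.inl rfl, 1, one_pos, ?_⟩
      refine tendsto_const_nhds.congr (fun n => ?_)
      rw [one_mul, div_self (hr n).ne']
  have hFeq := Fset_eq_of_anchor hε hr hF hx₀F hp₀ hx₀
  refine main_of_phi hε hr hFeq (fun t => t) (fun t u => rfl)
    (fun t _ => trivial) (fun y _ => ⟨y, ?_, rfl⟩)
  refine ⟨fun n => ε n * (y * r n), fun n => trivial, ?_⟩
  refine tendsto_const_nhds.congr (fun n => ?_)
  have h1 : ε n * (ε n * (y * r n)) / r n = (ε n * ε n) * y * (r n / r n) := by ring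
  rw [h1, hε.sq, div_self (hr n).ne', one_mul, mul_one]

lemma forward_Ici {a : ℝ} {r : ℕ → ℝ} (hr : ∀ n, 0 < r n) (hr' : Tendsto r atTop atTop)
    (F : Set (ℕ → ℝ)) (hF : MaxSelfStableY (Set.Ici a) r F) :
    ∃ Φ : F → ↥(Set.Ici a), Function.Surjective Φ ∧
      ∀ x y : F,
        Tendsto (fun n => |(x : ℕ → ℝ) n - (y : ℕ → ℝ) n| / r n) atTop
          (𝓝 (dist (Φ x) (Φ y))) := by
  have hε : IsSgn (fun _ => (1:ℝ)) := fun n => Or.inl rfl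
  have hFeq : F = Fset (Set.Ici a) r (fun _ => 1) := by
    apply hF.2 _ (Fset_selfStable hε hr)
    intro z hz
    obtain ⟨hzY, l, hl⟩ := hF.1.1 hz
    refine ⟨hzY, l, ?_⟩
    have := tendsto_div_of_lb hr hr' (fun n => hzY n) hl
    exact this.congr (fun n => by rw [one_mul])
  have hnn : ∀ t ∈ AAset (Set.Ici a) r (fun _ => 1), 0 ≤ t := by
    rintro t ⟨x, hxY, hxt⟩
    refine le_of_tendsto_of_tendsto' (tendsto_const_div hr' a) hxt (fun n => ?_)
    rw [one_mul]
    exact (div_le_div_iff_of_pos_right (hr n)).mpr (hxY n)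
  refine main_of_phi hε hr hFeq (fun t => a + t)
    (fun t u => by rw [add_sub_add_left_eq_sub])
    (fun t ht => le_add_of_nonneg_right (hnn t ht)) ?_
  intro y hy
  refine ⟨y - a, ⟨fun n => a + (y - a) * r n, fun n => ?_, ?_⟩, by ring⟩
  · exact le_add_of_nonneg_right (mul_nonneg (sub_nonneg.mpr hy) (hr n).le)
  · have h0 : Tendsto (fun n => a / r n + (y - a)) atTop (𝓝 (y - a)) := by
      simpa using (tendsto_const_div hr' a).add tendsto_const_nhds
    refine h0.congr (fun n => ?_)
    rw [one_mul, add_div, mul_div_assoc, div_self (hr n).ne', mul_one]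

lemma forward_Iic {a : ℝ} {r : ℕ → ℝ} (hr : ∀ n, 0 < r n) (hr' : Tendsto r atTop atTop)
    (F : Set (ℕ → ℝ)) (hF : MaxSelfStableY (Set.Iic a) r F) :
    ∃ Φ : F → ↥(Set.Iic a), Function.Surjective Φ ∧
      ∀ x y : F,
        Tendsto (fun n => |(x : ℕ → ℝ) n - (y : ℕ → ℝ) n| / r n) atTop
          (𝓝 (dist (Φ x) (Φ y))) := by
  have hε : IsSgn (fun _ => (-1:ℝ)) := fun n => Or.inr rfl
  have hFeq : F = Fset (Set.Iic a) r (fun _ => -1) := by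
    apply hF.2 _ (Fset_selfStable hε hr)
    intro z hz
    obtain ⟨hzY, l, hl⟩ := hF.1.1 hz
    refine ⟨hzY, l, ?_⟩
    have hl' : Tendsto (fun n => |(-z n)| / r n) atTop (𝓝 l) := by
      refine hl.congr (fun n => by rw [abs_neg])
    have := tendsto_div_of_lb hr hr' (fun n => neg_le_neg (hzY n)) hl'
    exact this.congr (fun n => by ring_nf)
  have hnn : ∀ t ∈ AAset (Set.Iic a) r (fun _ => -1), 0 ≤ t := by
    rintro t ⟨x, hxY, hxt⟩
    refine le_of_tendsto_of_tendsto' (tendsto_const_div hr' (-a)) hxt (fun n => ?_)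
    have h1 : (-1 : ℝ) * x n = -x n := by ring
    rw [h1]
    exact (div_le_div_iff_of_pos_right (hr n)).mpr (neg_le_neg (hxY n))
  refine main_of_phi hε hr hFeq (fun t => a - t)
    (fun t u => by rw [sub_sub_sub_cancel_left, abs_sub_comm])
    (fun t ht => sub_le_self a (hnn t ht)) ?_
  intro y hy
  refine ⟨a - y, ⟨fun n => a - (a - y) * r n, fun n => ?_, ?_⟩, by ring⟩
  · exact sub_le_self a (mul_nonneg (sub_nonneg.mpr hy) (hr n).le)
  · have h0 : Tendsto (fun n => -a / r n + (a - y)) atTop (𝓝 (a - y)) := by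
      simpa using (tendsto_const_div hr' (-a)).add tendsto_const_nhds
    refine h0.congr (fun n => ?_)
    have h1 : (-1 : ℝ) * (a - (a - y) * r n) / r n = -a / r n + (a - y) * (r n / r n) := by
      ring
    rw [h1, div_self (hr n).ne', mul_one]

def isoUniv : ↥(Set.univ : Set ℝ) ≃ᵢ ℝ where
  toFun x := x.1
  invFun v := ⟨v, trivial⟩
  left_inv x := rfl
  right_inv v := rfl
  isometry_toFun := Isometry.of_dist_eq (fun x y => (Subtype.dist_eq x y).symm)

def isoIci (a : ℝ) : ↥(Set.Ici a) ≃ᵢ ↥(Set.Ici (0:ℝ)) where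
  toFun x := ⟨x.1 - a, Set.mem_Ici.mpr (sub_nonneg.mpr (Set.mem_Ici.mp x.2))⟩
  invFun y := ⟨y.1 + a, Set.mem_Ici.mpr (le_add_of_nonneg_left (Set.mem_Ici.mp y.2))⟩
  left_inv x := Subtype.ext (by simp)
  right_inv y := Subtype.ext (by simp)
  isometry_toFun := Isometry.of_dist_eq (fun x y => by
    rw [Subtype.dist_eq, Subtype.dist_eq, Real.dist_eq, Real.dist_eq]
    congr 1
    ring)

def isoIic (a : ℝ) : ↥(Set.Iic a) ≃ᵢ ↥(Set.Ici (0:ℝ)) where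
  toFun x := ⟨a - x.1, Set.mem_Ici.mpr (sub_nonneg.mpr (Set.mem_Iic.mp x.2))⟩
  invFun y := ⟨a - y.1, Set.mem_Iic.mpr (sub_le_self a (Set.mem_Ici.mp y.2))⟩
  left_inv x := Subtype.ext (by simp)
  right_inv y := Subtype.ext (by simp)
  isometry_toFun := Isometry.of_dist_eq (fun x y => by
    rw [Subtype.dist_eq, Subtype.dist_eq, Real.dist_eq, Real.dist_eq,
      sub_sub_sub_cancel_left, abs_sub_comm])

lemma normalize {Y : Set ℝ}
    (h : Nonempty (↥Y ≃ᵢ ℝ) ∨ Nonempty (↥Y ≃ᵢ ↥(Set.Ici (0:ℝ)))) :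
    Y = Set.univ ∨ (∃ a, Y = Set.Ici a) ∨ (∃ a, Y = Set.Iic a) := by
  rcases h with h | h
  · obtain ⟨e⟩ := h
    left
    set χ : ℝ → ℝ := fun t => ((e.symm t : ↥Y) : ℝ) with hχ
    have hiso : ∀ v ∈ (Set.univ : Set ℝ), ∀ w ∈ (Set.univ : Set ℝ), |χ v - χ w| = |v - w| := by
      intro v _ w _
      calc |χ v - χ w| = dist (e.symm v) (e.symm w) := by
            rw [Subtype.dist_eq, Real.dist_eq]
      _ = dist v w := e.symm.dist_eq v w
      _ = |v - w| := Real.dist_eq v w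
    obtain ⟨σ, c, hσ, haff⟩ := rigid hiso (Set.mem_univ 0) (Set.mem_univ 1) one_ne_zero
    apply Set.eq_univ_of_forall
    intro w
    have h1 : χ (σ * (w - c)) = w := by
      rw [haff _ (Set.mem_univ _)]
      rcases hσ with rfl | rfl <;> ring
    rw [← h1]
    exact (e.symm _).2
  · obtain ⟨e⟩ := h
    right
    set χ : ℝ → ℝ := fun t => if h : (0:ℝ) ≤ t then ((e.symm ⟨t, h⟩ : ↥Y) : ℝ) else 0 with hχ
    have hiso : ∀ v ∈ Set.Ici (0:ℝ), ∀ w ∈ Set.Ici (0:ℝ), |χ v - χ w| = |v - w| := by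
      intro v hv w hw
      have hv' : (0:ℝ) ≤ v := hv
      have hw' : (0:ℝ) ≤ w := hw
      simp only [hχ, dif_pos hv', dif_pos hw']
      calc |((e.symm ⟨v, hv'⟩ : ↥Y) : ℝ) - ((e.symm ⟨w, hw'⟩ : ↥Y) : ℝ)|
          = dist (e.symm ⟨v, hv'⟩) (e.symm ⟨w, hw'⟩) := by
            rw [Subtype.dist_eq, Real.dist_eq]
      _ = dist (⟨v, hv'⟩ : ↥(Set.Ici (0:ℝ))) ⟨w, hw'⟩ := e.symm.dist_eq _ _
      _ = |v - w| := by rw [Subtype.dist_eq, Real.dist_eq]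
    obtain ⟨σ, c, hσ, haff⟩ := rigid hiso (le_refl (0:ℝ)) (zero_le_one (α := ℝ)) one_ne_zero
    have himg : Y = χ '' (Set.Ici 0) := by
      apply Set.Subset.antisymm
      · intro y hy
        refine ⟨((e ⟨y, hy⟩ : ↥(Set.Ici (0:ℝ))) : ℝ), (e ⟨y, hy⟩).2, ?_⟩
        show (if h : (0:ℝ) ≤ ((e ⟨y, hy⟩ : ↥(Set.Ici (0:ℝ))) : ℝ) then
            ((e.symm ⟨((e ⟨y, hy⟩ : ↥(Set.Ici (0:ℝ))) : ℝ), h⟩ : ↥Y) : ℝ) else 0) = y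
        rw [dif_pos (show (0:ℝ) ≤ ((e ⟨y, hy⟩ : ↥(Set.Ici (0:ℝ))) : ℝ) from (e ⟨y, hy⟩).2),
          Subtype.coe_eta, e.symm_apply_apply]
      · rintro v ⟨t, ht, rfl⟩
        have ht' : (0:ℝ) ≤ t := ht
        simp only [hχ, dif_pos ht']
        exact (e.symm ⟨t, ht'⟩).2
    rw [himg, Set.image_congr haff]
    rcases hσ with rfl | rfl
    · left
      refine ⟨c, ?_⟩
      ext v
      constructor
      · rintro ⟨t, ht, rfl⟩
        have : (0:ℝ) ≤ t := ht
        show 1 * t + c ∈ Set.Ici c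
        simp only [Set.mem_Ici]
        linarith
      · intro hv
        have hv' : c ≤ v := hv
        exact ⟨v - c, by simp only [Set.mem_Ici]; linarith, by ring⟩
    · right
      refine ⟨c, ?_⟩
      ext v
      constructor
      · rintro ⟨t, ht, rfl⟩
        have : (0:ℝ) ≤ t := ht
        show -1 * t + c ∈ Set.Iic c
        simp only [Set.mem_Iic]
        linarith
      · intro hv
        have hv' : v ≤ c := hv
        exact ⟨c - v, by simp only [Set.mem_Ici]; linarith, by ring⟩

def PROPdef (S : Set ℝ) : Prop :=
  ∀ r ε : ℕ → ℝ, (∀ n, 0 < r n) → Tendsto r atTop atTop → IsSgn ε →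
    (∃ p₀, 0 < p₀ ∧ p₀ ∈ AAset S r ε) →
    ∃ σ c : ℝ, (σ = 1 ∨ σ = -1) ∧ (fun v => σ * v + c) '' S = AAset S r ε

lemma two_points {Y : Set ℝ} (hY : ∀ C : ℝ, ∃ y ∈ Y, C < |y|) :
    ∃ y₁ ∈ Y, ∃ y₂ ∈ Y, y₂ ≠ y₁ := by
  obtain ⟨y₁, h₁, hb₁⟩ := hY 0
  obtain ⟨y₂, h₂, hb₂⟩ := hY |y₁|
  refine ⟨y₁, h₁, y₂, h₂, fun h => ?_⟩
  rw [h] at hb₂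
  exact absurd hb₂ (lt_irrefl _)

lemma tendsto_sgn_mul_zero {r ε : ℕ → ℝ} (hε : IsSgn ε) (hr : ∀ n, 0 < r n)
    (hr' : Tendsto r atTop atTop) (b : ℝ) :
    Tendsto (fun n => ε n * b / r n) atTop (𝓝 0) := by
  refine squeeze_zero_norm (fun n => ?_) (tendsto_const_div hr' |b|)
  have h1 : ‖ε n * b / r n‖ = |ε n| * |b| / |r n| := by
    rw [Real.norm_eq_abs, abs_div, abs_mul]
  rw [h1, hε.abs1, one_mul, abs_of_pos (hr n)]

lemma AAset_affine {S : Set ℝ} {r ε : ℕ → ℝ} (hε : IsSgn ε) (hr : ∀ n, 0 < r n)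
    (hr' : Tendsto r atTop atTop) {a b : ℝ} (ha : a = 1 ∨ a = -1) :
    AAset ((fun v => a * v + b) '' S) r ε = AAset S r (fun n => a * ε n) := by
  have ha2 : a * a = 1 := by rcases ha with rfl | rfl <;> norm_num
  ext t
  constructor
  · rintro ⟨x, hxT, hlim⟩
    refine ⟨fun n => a * x n - a * b, fun n => ?_, ?_⟩
    · obtain ⟨s, hs, hsx⟩ := hxT n
      have he : a * x n - a * b = s := by
        rw [← hsx]
        have : a * (a * s + b) - a * b = (a * a) * s := by ring
        rw [this, ha2, one_mul]
      show a * x n - a * b ∈ S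
      rw [he]; exact hs
    · have heq : ∀ n, (a * ε n) * (a * x n - a * b) / r n
          = ε n * x n / r n - ε n * b / r n := by
        intro n
        have h1 : (a * ε n) * (a * x n - a * b) = (a * a) * (ε n * x n - ε n * b) := by ring
        rw [h1, ha2, one_mul, sub_div]
      have hz := tendsto_sgn_mul_zero hε hr hr' b
      have := hlim.sub hz
      rw [sub_zero] at this
      exact this.congr (fun n => (heq n).symm)
  · rintro ⟨s, hsS, hlim⟩
    refine ⟨fun n => a * s n + b, fun n => ⟨s n, hsS n, rfl⟩, ?_⟩
    have heq : ∀ n, ε n * (a * s n + b) / r n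
        = (a * ε n) * s n / r n + ε n * b / r n := by
      intro n; rw [← add_div]; ring_nf
    have hz := tendsto_sgn_mul_zero hε hr hr' b
    have := hlim.add hz
    rw [add_zero] at this
    exact this.congr (fun n => (heq n).symm)

lemma AAset_scale {S : Set ℝ} {r ε : ℕ → ℝ} {μ : ℝ} (hμ : 0 < μ) :
    AAset S (fun n => r n / μ) ε = {t | t / μ ∈ AAset S r ε} := by
  have hid : ∀ (u v : ℝ), u / (v / μ) / μ = u / v := by
    intro u v
    rw [div_div_eq_mul_div, div_div, mul_comm v μ, ← div_div,
      mul_div_assoc, div_self hμ.ne', mul_one]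
  ext t
  constructor
  · rintro ⟨x, hxS, hlim⟩
    refine ⟨x, hxS, ?_⟩
    have := hlim.div_const μ
    exact this.congr (fun n => hid _ _)
  · rintro ⟨x, hxS, hlim⟩
    refine ⟨x, hxS, ?_⟩
    have h2 := hlim.const_mul μ
    have h3 : μ * (t / μ) = t := by field_simp
    rw [h3] at h2
    refine h2.congr (fun n => ?_)
    calc μ * (ε n * x n / r n) = ε n * x n / r n * μ := mul_comm _ _
    _ = ε n * x n * μ / r n := div_mul_eq_mul_div _ _ _
    _ = ε n * x n / (r n / μ) := (div_div_eq_mul_div _ _ _).symm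

lemma IsSgn.mul {a : ℝ} (ha : a = 1 ∨ a = -1) {ε : ℕ → ℝ} (hε : IsSgn ε) :
    IsSgn (fun n => a * ε n) := by
  intro n
  show a * ε n = 1 ∨ a * ε n = -1
  rcases ha with rfl | rfl <;> rcases hε n with h | h <;> rw [h] <;> norm_num

lemma prop_transfer {S : Set ℝ} {a b : ℝ} (ha : a = 1 ∨ a = -1) (hP : PROPdef S) :
    PROPdef ((fun v => a * v + b) '' S) := by
  intro r ε hr hr' hε hanchor
  have ha2 : a * a = 1 := by rcases ha with rfl | rfl <;> norm_num
  have hT := AAset_affine hε hr hr' (S := S) (b := b) ha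
  have hε' : IsSgn (fun n => a * ε n) := IsSgn.mul ha hε
  obtain ⟨p₀, hp₀, hpm⟩ := hanchor
  rw [hT] at hpm
  obtain ⟨σ, c, hσ, himg⟩ := hP r _ hr hr' hε' ⟨p₀, hp₀, hpm⟩
  refine ⟨σ * a, c - σ * a * b, by rcases hσ with rfl | rfl <;> rcases ha with rfl | rfl <;>
    norm_num, ?_⟩
  rw [hT, ← himg, ← Set.image_comp]
  apply Set.image_congr
  intro v _
  show σ * a * (a * v + b) + (c - σ * a * b) = σ * v + c
  have : σ * a * (a * v + b) + (c - σ * a * b) = σ * (a * a) * v + c := by ring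
  rw [this, ha2, mul_one]

lemma prop_of_hR {Y : Set ℝ} (hY : ∀ C : ℝ, ∃ y ∈ Y, C < |y|)
    (hR : ∀ r : ℕ → ℝ, (∀ n, 0 < r n) → Tendsto r atTop atTop →
      ∀ F : Set (ℕ → ℝ), MaxSelfStableY Y r F →
        ∃ Φ : F → ↥Y, Function.Surjective Φ ∧
          ∀ x y : F, Tendsto (fun n => |(x : ℕ → ℝ) n - (y : ℕ → ℝ) n| / r n) atTop
            (𝓝 (dist (Φ x) (Φ y)))) :
    PROPdef Y := by
  classical
  intro r ε hr hr' hε hanchor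
  obtain ⟨p₀, hp₀, x₀, hx₀Y, hx₀⟩ := hanchor
  obtain ⟨Φ, hsurj, hdist⟩ := hR r hr hr' (Fset Y r ε) (Fset_max hε hr hx₀Y hp₀ hx₀)
  have hmemF : ∀ x : (Fset Y r ε), ∃ t,
      Tendsto (fun n => ε n * (x : ℕ → ℝ) n / r n) atTop (𝓝 t) := fun x => x.2.2
  set ψ : (Fset Y r ε) → ℝ := fun x => Classical.choose (hmemF x) with hψdef
  have hψ : ∀ x : (Fset Y r ε), Tendsto (fun n => ε n * (x : ℕ → ℝ) n / r n) atTop (𝓝 (ψ x)) :=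
    fun x => Classical.choose_spec (hmemF x)
  have hd : ∀ x y : (Fset Y r ε), dist (Φ x) (Φ y) = |ψ x - ψ y| := by
    intro x y
    refine tendsto_nhds_unique (hdist x y) ?_
    exact (((hψ x).sub (hψ y)).abs).congr (fun n => (abs_sub_div_eq hε hr _ _ n).symm)
  set χ : ℝ → ℝ := fun v =>
    if h : v ∈ Y then ψ (Classical.choose (hsurj ⟨v, h⟩)) else 0 with hχdef
  have hΦχ : ∀ (v) (h : v ∈ Y), Φ (Classical.choose (hsurj ⟨v, h⟩)) = ⟨v, h⟩ :=
    fun v h => Classical.choose_spec (hsurj ⟨v, h⟩)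
  have hχval : ∀ (v) (h : v ∈ Y), χ v = ψ (Classical.choose (hsurj ⟨v, h⟩)) := by
    intro v h
    simp only [hχdef, dif_pos h]
  have hχiso : ∀ v ∈ Y, ∀ w ∈ Y, |χ v - χ w| = |v - w| := by
    intro v hv w hw
    rw [hχval v hv, hχval w hw, ← hd, hΦχ v hv, hΦχ w hw, Subtype.dist_eq, Real.dist_eq]
  obtain ⟨y₁, h₁, y₂, h₂, hne⟩ := two_points hY
  obtain ⟨σ, c, hσ, haff⟩ := rigid hχiso h₁ h₂ hne
  refine ⟨σ, c, hσ, ?_⟩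
  have himg : χ '' Y = AAset Y r ε := by
    apply Set.Subset.antisymm
    · rintro t ⟨v, hv, rfl⟩
      rw [hχval v hv]
      exact ⟨_, (Classical.choose (hsurj ⟨v, hv⟩)).2.1, hψ _⟩
    · rintro t ⟨x, hxY, hxt⟩
      have hxF : x ∈ Fset Y r ε := ⟨hxY, t, hxt⟩
      refine ⟨(Φ ⟨x, hxF⟩).1, (Φ ⟨x, hxF⟩).2, ?_⟩
      rw [hχval _ (Φ ⟨x, hxF⟩).2]
      have h0 : Φ (Classical.choose (hsurj ⟨(Φ ⟨x, hxF⟩).1, (Φ ⟨x, hxF⟩).2⟩)) = Φ ⟨x, hxF⟩ := by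
        rw [hΦχ]
      have h1 := hd (Classical.choose (hsurj ⟨(Φ ⟨x, hxF⟩).1, (Φ ⟨x, hxF⟩).2⟩)) ⟨x, hxF⟩
      rw [h0, dist_self] at h1
      have h2 : ψ (Classical.choose (hsurj ⟨(Φ ⟨x, hxF⟩).1, (Φ ⟨x, hxF⟩).2⟩)) = ψ ⟨x, hxF⟩ :=
        sub_eq_zero.mp (abs_eq_zero.mp h1.symm)
      rw [h2]
      exact tendsto_nhds_unique (hψ _) hxt
  rw [← himg]
  exact Set.image_congr (fun v hv => (haff v hv).symm)

def Paff (B : Set ℝ) (a b : ℝ) : Prop := (fun x => a * x + b) '' B = B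

lemma Paff.comp {B : Set ℝ} {a b a' b' : ℝ} (h : Paff B a b) (h' : Paff B a' b') :
    Paff B (a * a') (a * b' + b) := by
  unfold Paff at *
  have hfun : (fun x => (a * a') * x + (a * b' + b))
      = (fun x => a * x + b) ∘ (fun x => a' * x + b') := by
    funext x; simp only [Function.comp_apply]; ring
  rw [hfun, Set.image_comp, h', h]

lemma Paff.inv {B : Set ℝ} {a b : ℝ} (ha : a ≠ 0) (h : Paff B a b) :
    Paff B a⁻¹ (-(b / a)) := by
  unfold Paff at *
  conv_lhs => rw [← h]
  rw [← Set.image_comp]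
  have hfun : ((fun x => a⁻¹ * x + -(b / a)) ∘ (fun x => a * x + b)) = id := by
    funext x
    simp only [Function.comp_apply, id_eq]
    field_simp
    ring
  rw [hfun, Set.image_id]

lemma Paff.apply {B : Set ℝ} {a b : ℝ} (h : Paff B a b) {x : ℝ} (hx : x ∈ B) :
    a * x + b ∈ B := by
  rw [← h]
  exact ⟨x, hx, rfl⟩

lemma sqrt_mul_self' {u : ℝ} (hu : 0 < u) {a : ℝ} (hab : |a| = Real.sqrt u) : a * a = u := by
  have h1 : a * a = |a| * |a| := (abs_mul_abs_self a).symm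
  rw [h1, hab]
  exact Real.mul_self_sqrt hu.le

lemma classify_core {B : Set ℝ}
    (hB2 : ∃ b₁ ∈ B, ∃ b₂ ∈ B, b₂ ≠ b₁)
    (hscale : ∀ μ : ℝ, 0 < μ → ∃ a b : ℝ, |a| = μ ∧ Paff B a b) :
    B = Set.univ ∨ (∃ p, B = Set.Ici p) ∨ (∃ p, B = Set.Iic p) ∨
      (∃ p, B = Set.Ioi p) ∨ (∃ p, B = Set.Iio p) ∨ (∃ p, B = {p}ᶜ) := by
  obtain ⟨b₁, hb₁, b₂, hb₂, hbne⟩ := hB2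
  by_cases hD : ∃ d ≠ 0, Paff B 1 d
  · left
    obtain ⟨d, hd0, hPd⟩ := hD
    have hconj : ∀ a b e : ℝ, a ≠ 0 → Paff B a b → Paff B 1 e → Paff B 1 (a * e) := by
      intro a b e ha hab h1e
      have h2 := (hab.comp h1e).comp (hab.inv ha)
      have e1 : (a * 1) * a⁻¹ = 1 := by field_simp
      have e2 : (a * 1) * (-(b / a)) + (a * e + b) = a * e := by
        field_simp
        ring
      rwa [e1, e2] at h2
    have hall : ∀ u : ℝ, 0 < u → Paff B 1 (u * d) := by
      intro u hu
      obtain ⟨a, b, hab, hP⟩ := hscale (Real.sqrt u) (Real.sqrt_pos.mpr hu)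
      have haa : a * a = u := sqrt_mul_self' hu hab
      have ha0 : a ≠ 0 := by
        intro h
        rw [h] at haa
        simp at haa
        exact absurd haa.symm hu.ne'
      have h1 := hconj a b d ha0 hP hPd
      have h2 := hconj a b (a * d) ha0 hP h1
      have e : a * (a * d) = u * d := by rw [← mul_assoc, haa]
      rwa [e] at h2
    have htrans : ∀ v : ℝ, Paff B 1 v := by
      intro v
      rcases eq_or_ne v 0 with rfl | hv
      · show (fun x => 1 * x + 0) '' B = B
        simp
      · rcases lt_trichotomy (v / d) 0 with h | h | h
        · have hu : 0 < -(v / d) := by linarith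
          have := hall _ hu
          have e : -(v / d) * d = -v := by field_simp
          rw [e] at this
          have h2 := this.inv one_ne_zero
          have e2 : (1 : ℝ)⁻¹ = 1 := inv_one
          have e3 : -((-v) / 1) = v := by simp
          rwa [e2, e3] at h2
        · exact absurd h (div_ne_zero hv hd0)
        · have := hall _ h
          have e : v / d * d = v := div_mul_cancel₀ v hd0
          rwa [e] at this
    apply Set.eq_univ_of_forall
    intro v
    have := (htrans (v - b₁)).apply hb₁
    have e : 1 * b₁ + (v - b₁) = v := by ring
    rwa [e] at this
  · push_neg at hD
    have hane : ∀ a b : ℝ, Paff B a b → a ≠ 0 := by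
      intro a b h ha0
      subst ha0
      have h1 : b₁ ∈ (fun x => (0:ℝ) * x + b) '' B := by rw [h]; exact hb₁
      have h2 : b₂ ∈ (fun x => (0:ℝ) * x + b) '' B := by rw [h]; exact hb₂
      obtain ⟨x1, _, he1⟩ := h1
      obtain ⟨x2, _, he2⟩ := h2
      simp only [zero_mul, zero_add] at he1 he2
      exact hbne (he2 ▸ he1 ▸ rfl)
    have hcomm : ∀ a b a' b' : ℝ, Paff B a b → Paff B a' b' → a * b' + b = a' * b + b' := by
      intro a b a' b' h h'
      have ha := hane _ _ h
      have ha' := hane _ _ h'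
      have h1 := (h.comp h').comp ((h'.comp h).inv (mul_ne_zero ha' ha))
      have e1 : (a * a') * (a' * a)⁻¹ = 1 := by
        rw [mul_comm a' a]
        exact mul_inv_cancel₀ (mul_ne_zero ha ha')
      rw [e1] at h1
      have h0 : (a * a') * (-((a' * b + b') / (a' * a))) + (a * b' + b) = 0 := by
        by_contra hE
        exact hD _ hE h1
      have e2 : (a * a') * (-((a' * b + b') / (a' * a))) + (a * b' + b)
          = a * b' + b - (a' * b + b') := by
        rw [mul_comm a' a]
        field_simp
        ring
      rw [e2] at h0
      linarith
    obtain ⟨a₂, b₂', hab₂, hP₂⟩ := hscale 2 two_pos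
    have ha₂1 : (1:ℝ) - a₂ ≠ 0 := by
      intro h
      have : a₂ = 1 := by linarith
      rw [this] at hab₂
      norm_num at hab₂
    set p := b₂' / (1 - a₂) with hp
    have hfix : ∀ a b : ℝ, Paff B a b → b = p * (1 - a) := by
      intro a b h
      have hc := hcomm a b a₂ b₂' h hP₂
      rw [hp]
      field_simp
      linarith
    have hsc : ∀ u : ℝ, 0 < u → ∀ x ∈ B, u * (x - p) + p ∈ B := by
      intro u hu x hx
      obtain ⟨a, b, hab, hP⟩ := hscale (Real.sqrt u) (Real.sqrt_pos.mpr hu)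
      have haa : a * a = u := sqrt_mul_self' hu hab
      have hb := hfix a b hP
      have hcomp := hP.comp hP
      have e : a * b + b = p * (1 - u) := by
        rw [hb]
        have e2 : a * (p * (1 - a)) + p * (1 - a) = p * (1 - a * a) := by ring
        rw [e2, haa]
      rw [haa, e] at hcomp
      have := hcomp.apply hx
      have e2 : u * x + p * (1 - u) = u * (x - p) + p := by ring
      rwa [e2] at this
    have hray_pos : (∃ q ∈ B, p < q) → ∀ w, p < w → w ∈ B := by
      rintro ⟨q, hq, hpq⟩ w hw
      have hu : 0 < (w - p) / (q - p) := div_pos (by linarith) (by linarith)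
      have := hsc _ hu q hq
      have e : (w - p) / (q - p) * (q - p) + p = w := by
        rw [div_mul_cancel₀ _ (by linarith : q - p ≠ 0)]
        ring
      rwa [e] at this
    have hray_neg : (∃ q ∈ B, q < p) → ∀ w, w < p → w ∈ B := by
      rintro ⟨q, hq, hpq⟩ w hw
      have hu : 0 < (w - p) / (q - p) := div_pos_of_neg_of_neg (by linarith) (by linarith)
      have := hsc _ hu q hq
      have e : (w - p) / (q - p) * (q - p) + p = w := by
        rw [div_mul_cancel₀ _ (by linarith : q - p ≠ 0)]
        ring
      rwa [e] at this
    by_cases hP1 : ∃ q ∈ B, p < q <;> by_cases hN1 : ∃ q ∈ B, q < p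
    · by_cases hpB : p ∈ B
      · left
        apply Set.eq_univ_of_forall
        intro v
        rcases lt_trichotomy v p with h | rfl | h
        · exact hray_neg hN1 v h
        · exact hpB
        · exact hray_pos hP1 v h
      · right; right; right; right; right
        refine ⟨p, ?_⟩
        ext v
        constructor
        · intro hv
          intro hvp
          rw [Set.mem_singleton_iff] at hvp
          exact hpB (hvp ▸ hv)
        · intro hv
          rcases lt_or_gt_of_ne (fun h => hv (Set.mem_singleton_iff.mpr h)) with h | h
          · exact hray_neg hN1 v h
          · exact hray_pos hP1 v h
    · push_neg at hN1
      by_cases hpB : p ∈ B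
      · right; left
        refine ⟨p, ?_⟩
        ext v
        constructor
        · intro hv
          exact hN1 v hv
        · intro hv
          rcases eq_or_lt_of_le (Set.mem_Ici.mp hv) with rfl | h
          · exact hpB
          · exact hray_pos hP1 v h
      · right; right; right; left
        refine ⟨p, ?_⟩
        ext v
        constructor
        · intro hv
          rcases eq_or_lt_of_le (hN1 v hv) with h | h
          · exact absurd (h ▸ hv) hpB
          · exact h
        · intro hv
          exact hray_pos hP1 v hv
    · push_neg at hP1
      by_cases hpB : p ∈ B
      · right; right; left
        refine ⟨p, ?_⟩
        ext v
        constructor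
        · intro hv
          exact hP1 v hv
        · intro hv
          rcases eq_or_lt_of_le (Set.mem_Iic.mp hv) with rfl | h
          · exact hpB
          · exact hray_neg hN1 v h
      · right; right; right; right; left
        refine ⟨p, ?_⟩
        ext v
        constructor
        · intro hv
          rcases eq_or_lt_of_le (hP1 v hv) with h | h
          · exact absurd (h.symm ▸ hv) hpB
          · exact h
        · intro hv
          exact hray_neg hN1 v hv
    · exfalso
      push_neg at hP1 hN1
      have h1 : b₁ = p := le_antisymm (hP1 b₁ hb₁) (hN1 b₁ hb₁)
      have h2 : b₂ = p := le_antisymm (hP1 b₂ hb₂) (hN1 b₂ hb₂)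
      exact hbne (h2.trans h1.symm)

lemma hr_lin_pos : ∀ n : ℕ, 0 < (n:ℝ) + 1 := fun n => by positivity

lemma hr_lin_top : Tendsto (fun n : ℕ => (n:ℝ) + 1) atTop atTop :=
  tendsto_atTop_add_const_right _ 1 tendsto_natCast_atTop_atTop

lemma excl_Ioi (p : ℝ) (h : PROPdef (Set.Ioi p)) : False := by
  have hε : IsSgn (fun _ : ℕ => (1:ℝ)) := fun n => Or.inl rfl
  have hAA : AAset (Set.Ioi p) (fun n => (n:ℝ) + 1) (fun _ => 1) = Set.Ici 0 := by
    apply Set.Subset.antisymm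
    · rintro t ⟨x, hxY, hlim⟩
      refine Set.mem_Ici.mpr (le_of_tendsto_of_tendsto' (tendsto_const_div hr_lin_top p)
        hlim (fun n => ?_))
      rw [one_mul]
      exact (div_le_div_iff_of_pos_right (hr_lin_pos n)).mpr (le_of_lt (hxY n))
    · intro t ht
      have ht' : (0:ℝ) ≤ t := ht
      refine ⟨fun n => t * ((n:ℝ) + 1) + (|p| + 1), fun n => ?_, ?_⟩
      · show p < t * ((n:ℝ) + 1) + (|p| + 1)
        have h1 : 0 ≤ t * ((n:ℝ) + 1) := mul_nonneg ht' (hr_lin_pos n).le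
        have h2 : p ≤ |p| := le_abs_self p
        linarith
      · have h0 : Tendsto (fun n : ℕ => t + (|p| + 1) / ((n:ℝ) + 1)) atTop (𝓝 t) := by
          simpa using (tendsto_const_nhds (x := t) (f := atTop (α := ℕ))).add
            (tendsto_const_div hr_lin_top (|p| + 1))
        refine h0.congr (fun n => ?_)
        show t + (|p| + 1) / ((n:ℝ) + 1) = 1 * (t * ((n:ℝ) + 1) + (|p| + 1)) / ((n:ℝ) + 1)
        have hne := (hr_lin_pos n).ne'
        field_simp
  obtain ⟨σ, c, hσ, himg⟩ := h _ (fun _ => 1) hr_lin_pos hr_lin_top hε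
    ⟨1, one_pos, by rw [hAA]; exact Set.mem_Ici.mpr zero_le_one⟩
  rw [hAA] at himg
  have h0 : (0:ℝ) ∈ (fun v => σ * v + c) '' Set.Ioi p := by
    rw [himg]; exact Set.mem_Ici.mpr (le_refl 0)
  obtain ⟨v₀, hv₀, hv₀e⟩ := h0
  have hv : p < v₀ := hv₀
  rcases hσ with rfl | rfl
  · have hmem : (p + v₀) / 2 ∈ Set.Ioi p := Set.mem_Ioi.mpr (by linarith)
    have h1 : 1 * ((p + v₀) / 2) + c ∈ Set.Ici 0 := by rw [← himg]; exact ⟨_, hmem, rfl⟩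
    have h2 := Set.mem_Ici.mp h1
    simp only [one_mul] at hv₀e h2
    linarith
  · have hmem : v₀ + 1 ∈ Set.Ioi p := Set.mem_Ioi.mpr (by linarith)
    have h1 : -1 * (v₀ + 1) + c ∈ Set.Ici 0 := by rw [← himg]; exact ⟨_, hmem, rfl⟩
    have h2 := Set.mem_Ici.mp h1
    have h3 : -1 * v₀ + c = 0 := hv₀e
    linarith

lemma excl_Iio (p : ℝ) (h : PROPdef (Set.Iio p)) : False := by
  have hε : IsSgn (fun _ : ℕ => (-1:ℝ)) := fun n => Or.inr rfl
  have hAA : AAset (Set.Iio p) (fun n => (n:ℝ) + 1) (fun _ => -1) = Set.Ici 0 := by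
    apply Set.Subset.antisymm
    · rintro t ⟨x, hxY, hlim⟩
      refine Set.mem_Ici.mpr (le_of_tendsto_of_tendsto' (tendsto_const_div hr_lin_top (-p))
        hlim (fun n => ?_))
      have he : (-1:ℝ) * x n = -x n := by ring
      rw [he]
      exact (div_le_div_iff_of_pos_right (hr_lin_pos n)).mpr (by
        have := hxY n
        have h2 : x n < p := this
        linarith)
    · intro t ht
      have ht' : (0:ℝ) ≤ t := ht
      refine ⟨fun n => -(t * ((n:ℝ) + 1) + (|p| + 1)), fun n => ?_, ?_⟩
      · show -(t * ((n:ℝ) + 1) + (|p| + 1)) < p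
        have h1 : 0 ≤ t * ((n:ℝ) + 1) := mul_nonneg ht' (hr_lin_pos n).le
        have h2 : -p ≤ |p| := neg_le_abs p
        linarith
      · have h0 : Tendsto (fun n : ℕ => t + (|p| + 1) / ((n:ℝ) + 1)) atTop (𝓝 t) := by
          simpa using (tendsto_const_nhds (x := t) (f := atTop (α := ℕ))).add
            (tendsto_const_div hr_lin_top (|p| + 1))
        refine h0.congr (fun n => ?_)
        show t + (|p| + 1) / ((n:ℝ) + 1)
            = (-1:ℝ) * (-(t * ((n:ℝ) + 1) + (|p| + 1))) / ((n:ℝ) + 1)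
        have hne := (hr_lin_pos n).ne'
        field_simp
  obtain ⟨σ, c, hσ, himg⟩ := h _ (fun _ => -1) hr_lin_pos hr_lin_top hε
    ⟨1, one_pos, by rw [hAA]; exact Set.mem_Ici.mpr zero_le_one⟩
  rw [hAA] at himg
  have h0 : (0:ℝ) ∈ (fun v => σ * v + c) '' Set.Iio p := by
    rw [himg]; exact Set.mem_Ici.mpr (le_refl 0)
  obtain ⟨v₀, hv₀, hv₀e⟩ := h0
  have hv : v₀ < p := hv₀
  rcases hσ with rfl | rfl
  · have hmem : v₀ - 1 ∈ Set.Iio p := Set.mem_Iio.mpr (by linarith)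
    have h1 : 1 * (v₀ - 1) + c ∈ Set.Ici 0 := by rw [← himg]; exact ⟨_, hmem, rfl⟩
    have h2 := Set.mem_Ici.mp h1
    have h3 : 1 * v₀ + c = 0 := hv₀e
    linarith
  · have hmem : (p + v₀) / 2 ∈ Set.Iio p := Set.mem_Iio.mpr (by linarith)
    have h1 : -1 * ((p + v₀) / 2) + c ∈ Set.Ici 0 := by rw [← himg]; exact ⟨_, hmem, rfl⟩
    have h2 := Set.mem_Ici.mp h1
    have h3 : -1 * v₀ + c = 0 := hv₀e
    linarith

lemma excl_compl (p : ℝ) (h : PROPdef ({p}ᶜ : Set ℝ)) : False := by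
  have hε : IsSgn (fun _ : ℕ => (1:ℝ)) := fun n => Or.inl rfl
  have hAA : AAset ({p}ᶜ : Set ℝ) (fun n => (n:ℝ) + 1) (fun _ => 1) = Set.univ := by
    apply Set.eq_univ_of_forall
    intro t
    refine ⟨fun n => t * ((n:ℝ) + 1) + (if t * ((n:ℝ) + 1) = p then 1 else 0), fun n => ?_, ?_⟩
    · show t * ((n:ℝ) + 1) + (if t * ((n:ℝ) + 1) = p then 1 else 0) ∈ ({p}ᶜ : Set ℝ)
      by_cases hc : t * ((n:ℝ) + 1) = p
      · rw [if_pos hc, hc]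
        intro hmem
        rw [Set.mem_singleton_iff] at hmem
        linarith
      · rw [if_neg hc, add_zero]
        intro hmem
        rw [Set.mem_singleton_iff] at hmem
        exact hc hmem
    · have h0 : Tendsto (fun n : ℕ =>
          (if t * ((n:ℝ) + 1) = p then (1:ℝ) else 0) / ((n:ℝ) + 1)) atTop (𝓝 0) := by
        refine squeeze_zero_norm (fun n => ?_) (tendsto_const_div hr_lin_top 1)
        rw [Real.norm_eq_abs, abs_div, abs_of_pos (hr_lin_pos n)]
        refine (div_le_div_iff_of_pos_right (hr_lin_pos n)).mpr ?_
        split_ifs <;> norm_num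
      have h1 : Tendsto (fun n : ℕ => t + (if t * ((n:ℝ) + 1) = p then (1:ℝ) else 0) /
          ((n:ℝ) + 1)) atTop (𝓝 t) := by
        simpa using (tendsto_const_nhds (x := t) (f := atTop (α := ℕ))).add h0
      refine h1.congr (fun n => ?_)
      show t + (if t * ((n:ℝ) + 1) = p then (1:ℝ) else 0) / ((n:ℝ) + 1)
          = 1 * (t * ((n:ℝ) + 1) + (if t * ((n:ℝ) + 1) = p then (1:ℝ) else 0)) / ((n:ℝ) + 1)
      have hne := (hr_lin_pos n).ne'
      field_simp
  obtain ⟨σ, c, hσ, himg⟩ := h _ (fun _ => 1) hr_lin_pos hr_lin_top hε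
    ⟨1, one_pos, by rw [hAA]; exact Set.mem_univ 1⟩
  rw [hAA] at himg
  have h0 : σ * p + c ∈ (fun v => σ * v + c) '' ({p}ᶜ : Set ℝ) := by
    rw [himg]; exact Set.mem_univ _
  obtain ⟨v₀, hv₀, hv₀e⟩ := h0
  have hσ0 : σ ≠ 0 := by rcases hσ with rfl | rfl <;> norm_num
  have hv₀e' : σ * v₀ + c = σ * p + c := hv₀e
  have hvp : v₀ = p := mul_left_cancel₀ hσ0 (by linarith : σ * v₀ = σ * p)
  exact hv₀ (Set.mem_singleton_iff.mpr hvp)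

lemma shape_core {Y : Set ℝ} (hY : ∀ C : ℝ, ∃ y ∈ Y, C < |y|) (hP : PROPdef Y) :
    Y = Set.univ ∨ (∃ a, Y = Set.Ici a) ∨ (∃ a, Y = Set.Iic a) := by
  classical
  have hch : ∀ n : ℕ, ∃ z ∈ Y, (n:ℝ) < |z| := fun n => hY n
  set y : ℕ → ℝ := fun n => (hch n).choose with hydef
  have hyY : ∀ n, y n ∈ Y := fun n => (hch n).choose_spec.1
  have hygt : ∀ n : ℕ, (n:ℝ) < |y n| := fun n => (hch n).choose_spec.2
  set r₀ : ℕ → ℝ := fun n => |y n| with hr₀def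
  have hr₀ : ∀ n, 0 < r₀ n := fun n => lt_of_le_of_lt (Nat.cast_nonneg n) (hygt n)
  have hr₀' : Tendsto r₀ atTop atTop :=
    tendsto_atTop_mono (fun n => (hygt n).le) tendsto_natCast_atTop_atTop
  set ε₀ : ℕ → ℝ := fun n => if y n < 0 then -1 else 1 with hε₀def
  have hε₀ : IsSgn ε₀ := fun n => by
    by_cases h : y n < 0
    · right; simp only [hε₀def, if_pos h]
    · left; simp only [hε₀def, if_neg h]
  have hεy : ∀ n, ε₀ n * y n = |y n| := by
    intro n; by_cases h : y n < 0
    · simp only [hε₀def, if_pos h]; rw [abs_of_neg h]; ring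
    · simp only [hε₀def, if_neg h]; rw [abs_of_nonneg (not_lt.mp h)]; ring
  have h1mem : (1:ℝ) ∈ AAset Y r₀ ε₀ := by
    refine ⟨y, hyY, ?_⟩
    refine tendsto_const_nhds.congr (fun n => ?_)
    show (1:ℝ) = ε₀ n * y n / r₀ n
    rw [hεy n]
    exact (div_self (hr₀ n).ne').symm
  obtain ⟨σ₀, c₀, hσ₀, hB0⟩ := hP r₀ ε₀ hr₀ hr₀' hε₀ ⟨1, one_pos, h1mem⟩
  set B := AAset Y r₀ ε₀ with hBdef
  have hσ00 : σ₀ ≠ 0 := by rcases hσ₀ with rfl | rfl <;> norm_num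
  have hσ0sq : σ₀ * σ₀ = 1 := by rcases hσ₀ with rfl | rfl <;> norm_num
  have hPB : PROPdef B := by rw [← hB0]; exact prop_transfer hσ₀ hP
  have h1B : (1:ℝ) ∈ B := h1mem
  have hBub : ∃ b₁ ∈ B, ∃ b₂ ∈ B, b₂ ≠ b₁ := by
    obtain ⟨y₁, h₁, y₂, h₂, hne⟩ := two_points hY
    refine ⟨σ₀ * y₁ + c₀, ?_, σ₀ * y₂ + c₀, ?_, ?_⟩
    · rw [← hB0]; exact ⟨y₁, h₁, rfl⟩
    · rw [← hB0]; exact ⟨y₂, h₂, rfl⟩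
    · intro h
      exact hne (mul_left_cancel₀ hσ00 (by linarith))
  have hε' : IsSgn (fun n => σ₀ * ε₀ n) := IsSgn.mul hσ₀ hε₀
  have hABflip : ∀ (r : ℕ → ℝ), (∀ n, 0 < r n) → Tendsto r atTop atTop →
      AAset B r (fun n => σ₀ * ε₀ n) = AAset Y r ε₀ := by
    intro r hr hr'
    rw [← hB0, AAset_affine hε' hr hr' hσ₀]
    have hfun : (fun n : ℕ => σ₀ * (σ₀ * ε₀ n)) = ε₀ := by
      funext n
      rw [← mul_assoc, hσ0sq, one_mul]
    show AAset Y r (fun n : ℕ => σ₀ * (σ₀ * ε₀ n)) = AAset Y r ε₀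
    rw [hfun]
  have hscale : ∀ μ : ℝ, 0 < μ → ∃ a b : ℝ, |a| = μ ∧ Paff B a b := by
    intro μ hμ
    have hrp : ∀ n, 0 < r₀ n / μ := fun n => div_pos (hr₀ n) hμ
    have hrt : Tendsto (fun n => r₀ n / μ) atTop atTop := hr₀'.atTop_div_const hμ
    have hAB : AAset B (fun n => r₀ n / μ) (fun n => σ₀ * ε₀ n) = {t | t / μ ∈ B} := by
      rw [hABflip _ hrp hrt, AAset_scale hμ]
    have hanch : ∃ p₀, 0 < p₀ ∧ p₀ ∈ AAset B (fun n => r₀ n / μ) (fun n => σ₀ * ε₀ n) := by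
      refine ⟨μ, hμ, ?_⟩
      rw [hAB]
      show μ / μ ∈ B
      rw [div_self hμ.ne']
      exact h1B
    obtain ⟨σ, c, hσ, himg⟩ := hPB _ _ hrp hrt hε' hanch
    rw [hAB] at himg
    have hμB : {t | t / μ ∈ B} = (fun x => μ * x) '' B := by
      ext t
      constructor
      · intro ht
        exact ⟨t / μ, ht, by field_simp⟩
      · rintro ⟨b', hb', rfl⟩
        show μ * b' / μ ∈ B
        rw [mul_comm, mul_div_assoc, div_self hμ.ne', mul_one]
        exact hb'
    rw [hμB] at himg
    have hσσ : σ * σ = 1 := by rcases hσ with rfl | rfl <;> norm_num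
    refine ⟨σ * μ, -(σ * c), by
      rw [abs_mul]
      rcases hσ with rfl | rfl <;> simp [abs_of_pos hμ], ?_⟩
    unfold Paff
    have hg : (fun x => σ * μ * x + -(σ * c)) = (fun x => σ * x - σ * c) ∘ (fun x => μ * x) := by
      funext x; simp only [Function.comp_apply]; ring
    rw [hg, Set.image_comp, ← himg, ← Set.image_comp]
    have hid : ((fun x => σ * x - σ * c) ∘ (fun x => σ * x + c)) = id := by
      funext x
      simp only [Function.comp_apply, id_eq]
      have : σ * (σ * x + c) - σ * c = (σ * σ) * x := by ring
      rw [this, hσσ, one_mul]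
    rw [hid, Set.image_id]
  have hYiff : ∀ w, w ∈ Y ↔ σ₀ * w + c₀ ∈ B := by
    intro w
    constructor
    · intro hw; rw [← hB0]; exact ⟨w, hw, rfl⟩
    · intro hw
      rw [← hB0] at hw
      obtain ⟨v, hv, hve⟩ := hw
      have hve' : σ₀ * v + c₀ = σ₀ * w + c₀ := hve
      have hvw : v = w := mul_left_cancel₀ hσ00 (by linarith)
      rwa [hvw] at hv
  rcases classify_core hBub hscale with hBu | ⟨p, hBp⟩ | ⟨p, hBp⟩ | ⟨p, hBp⟩ | ⟨p, hBp⟩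
    | ⟨p, hBp⟩
  · left
    apply Set.eq_univ_of_forall
    intro w
    exact (hYiff w).mpr (by rw [hBu]; exact Set.mem_univ _)
  · rcases hσ₀ with rfl | rfl
    · right; left
      refine ⟨p - c₀, ?_⟩
      ext w
      rw [hYiff w, hBp]
      simp only [Set.mem_Ici, one_mul]
      constructor <;> intro h <;> linarith
    · right; right
      refine ⟨c₀ - p, ?_⟩
      ext w
      rw [hYiff w, hBp]
      simp only [Set.mem_Iic, Set.mem_Ici]
      constructor <;> intro h <;> linarith
  · rcases hσ₀ with rfl | rfl
    · right; right
      refine ⟨p - c₀, ?_⟩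
      ext w
      rw [hYiff w, hBp]
      simp only [Set.mem_Iic, one_mul]
      constructor <;> intro h <;> linarith
    · right; left
      refine ⟨c₀ - p, ?_⟩
      ext w
      rw [hYiff w, hBp]
      simp only [Set.mem_Iic, Set.mem_Ici]
      constructor <;> intro h <;> linarith
  · exact absurd (hBp ▸ hPB) (fun h => excl_Ioi p h)
  · exact absurd (hBp ▸ hPB) (fun h => excl_Iio p h)
  · exact absurd (hBp ▸ hPB) (fun h => excl_compl p h)

end
end PretangentAux

/-- An unbounded subset `Y` of the real line is isometric to `ℝ` or to `ℝ₊ = [0,∞)`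
if and only if every pretangent space at infinity of `Y` is isometric to `Y`, i.e.
for every scaling sequence `r` and every maximal self-stable `F ⊆ Seq(Y, r̃)` there
is a surjection `Φ : F → Y` with `|Φ x̃ - Φ ỹ| = d_r̃(x̃, ỹ)` for all `x̃, ỹ ∈ F`. -/
theorem isometric_to_line_or_halfline_iff_pretangent_isometric (Y : Set ℝ)
    (hY : ∀ C : ℝ, ∃ y ∈ Y, C < |y|) :
    (Nonempty (↥Y ≃ᵢ ℝ) ∨ Nonempty (↥Y ≃ᵢ ↥(Set.Ici (0 : ℝ)))) ↔
    (∀ r : ℕ → ℝ, (∀ n, 0 < r n) → Tendsto r atTop atTop →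
      ∀ F : Set (ℕ → ℝ), MaxSelfStableY Y r F →
        ∃ Φ : F → ↥Y, Function.Surjective Φ ∧
          ∀ x y : F, Tendsto (fun n => |(x : ℕ → ℝ) n - (y : ℕ → ℝ) n| / r n) atTop
            (𝓝 (dist (Φ x) (Φ y)))) := by
  constructor
  · intro hiso r hr hr' F hF
    rcases PretangentAux.normalize hiso with rfl | ⟨a, rfl⟩ | ⟨a, rfl⟩
    · exact PretangentAux.forward_univ hr hr' F hF
    · exact PretangentAux.forward_Ici hr hr' F hF
    · exact PretangentAux.forward_Iic hr hr' F hF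
  · intro hR
    have hP := PretangentAux.prop_of_hR hY hR
    rcases PretangentAux.shape_core hY hP with rfl | ⟨a, rfl⟩ | ⟨a, rfl⟩
    · exact Or.inl ⟨PretangentAux.isoUniv⟩
    · exact Or.inr ⟨PretangentAux.isoIci a⟩
    · exact Or.inr ⟨PretangentAux.isoIic a⟩
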